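/- arXiv:1309.0152 — 8 statements merged into one kernel-verified Lean document; each statement's English description precedes it below -/
import Mathlib

section
/- The Fibonacci matrix F̂ defined by F̂_{n,n} = f_n/f_{n+1}, F̂_{n,n-1} = -f_{n+1}/f_n, and F̂_{n,k} = 0 otherwise, has a two-sided inverse given by the lower triangular matrix G with G_{n,k} = f_{n+1}^2/(f_k f_{k+1}) for 0 ≤ k ≤ n and G_{n,k} = 0 for k > n; i.e., for all n, m, Σ_k F̂_{n,k} G_{k,m} = δ_{n,m} and Σ_k G_{n,k} F̂_{k,m} = δ_{n,m}. -/
open scoped BigOperators ENNReal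
open Filter Topology

noncomputable def fibr (n : ℕ) : ℝ := (Nat.fib (n + 1) : ℝ)

lemma fibr_pos (n : ℕ) : 0 < fibr n := by
  simpa [fibr] using Nat.cast_pos.mpr (Nat.fib_pos.mpr (Nat.succ_pos n))

noncomputable def Fhat (x : ℕ → ℝ) : ℕ → ℝ
  | 0 => x 0
  | (n + 1) => fibr (n + 1) / fibr (n + 2) * x (n + 1) - fibr (n + 2) / fibr (n + 1) * x n

lemma Fhat_add (x y : ℕ → ℝ) : Fhat (x + y) = Fhat x + Fhat y := by
  funext n; cases n <;> simp [Fhat] <;> ring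

lemma Fhat_smul (c : ℝ) (x : ℕ → ℝ) : Fhat (c • x) = c • Fhat x := by
  funext n; cases n <;> simp [Fhat] <;> ring

noncomputable def FhatL : (ℕ → ℝ) →ₗ[ℝ] (ℕ → ℝ) where
  toFun := Fhat
  map_add' := Fhat_add
  map_smul' := Fhat_smul

lemma Fhat_inj : Function.Injective Fhat := by
  have h0 : ∀ x : ℕ → ℝ, Fhat x = 0 → x = 0 := by
    intro x hx
    funext n
    induction n with
    | zero => simpa [Fhat] using congrFun hx 0
    | succ n ih =>
        have h := congrFun hx (n + 1)
        simp only [Fhat, ih, Pi.zero_apply, mul_zero, sub_zero] at h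
        have h1 : fibr (n + 1) / fibr (n + 2) ≠ 0 :=
          div_ne_zero (fibr_pos _).ne' (fibr_pos _).ne'
        simpa [Pi.zero_apply] using (mul_eq_zero.mp h).resolve_left h1
  have : Function.Injective FhatL := (injective_iff_map_eq_zero' FhatL).mpr
    (fun x => ⟨fun h => h0 x h, fun h => by simp [FhatL, h]; funext n; cases n <;> simp [Fhat]⟩)
  exact this

noncomputable def FhatLP : PreLp (fun _ : ℕ => ℝ) →ₗ[ℝ] PreLp (fun _ : ℕ => ℝ) where
  toFun x := Fhat x
  map_add' x y := Fhat_add x y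
  map_smul' c x := Fhat_smul c x

noncomputable def ellF (p : ℝ≥0∞) : Submodule ℝ (PreLp (fun _ : ℕ => ℝ)) :=
  (lpSubmodule ℝ (fun _ : ℕ => ℝ) p).comap FhatLP

instance (p : ℝ≥0∞) : CoeOut (ellF p) (ℕ → ℝ) := ⟨fun x => (x : PreLp (fun _ : ℕ => ℝ))⟩

noncomputable def ellFtoLp (p : ℝ≥0∞) : ellF p →ₗ[ℝ] lp (fun _ : ℕ => ℝ) p where
  toFun x := ⟨Fhat (x : ℕ → ℝ), x.2⟩
  map_add' x y := Subtype.ext (Fhat_add (x : ℕ → ℝ) (y : ℕ → ℝ))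
  map_smul' c x := Subtype.ext (Fhat_smul c (x : ℕ → ℝ))

lemma ellFtoLp_inj (p : ℝ≥0∞) : Function.Injective (ellFtoLp p) := by
  intro x y h
  have h2 : Fhat (x : ℕ → ℝ) = Fhat (y : ℕ → ℝ) := congrArg Subtype.val h
  exact Subtype.ext (Fhat_inj h2)

noncomputable instance (p : ℝ≥0∞) [Fact (1 ≤ p)] : NormedAddCommGroup (ellF p) :=
  NormedAddCommGroup.induced _ _ (ellFtoLp p) (ellFtoLp_inj p)

noncomputable instance (p : ℝ≥0∞) [Fact (1 ≤ p)] : NormedSpace ℝ (ellF p) :=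
  NormedSpace.induced _ _ _ (ellFtoLp p)

noncomputable def abar (a : ℕ → ℝ) (k : ℕ) : ℝ :=
  ∑' j : ℕ, (fibr (k + j + 1)) ^ 2 / (fibr k * fibr (k + 1)) * a (k + j)

noncomputable def hmnc {X : Type*} [MetricSpace X] (Q : Set X) : ℝ :=
  sInf {ε : ℝ | 0 < ε ∧ ∃ s : Finset X, Q ⊆ ⋃ x ∈ s, Metric.ball x ε}



noncomputable def FhatM (n k : ℕ) : ℝ :=
  if k = n then fibr n / fibr (n + 1)
  else if k + 1 = n then -(fibr (n + 1) / fibr n) else 0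

noncomputable def GM (n k : ℕ) : ℝ :=
  if k ≤ n then fibr (n + 1) ^ 2 / (fibr k * fibr (k + 1)) else 0

theorem stmt0 (n m : ℕ) :
    (∑' k : ℕ, FhatM n k * GM k m) = (if n = m then (1 : ℝ) else 0) ∧
    (∑' k : ℕ, GM n k * FhatM k m) = (if n = m then (1 : ℝ) else 0) := by
  have hne : ∀ k, fibr k ≠ 0 := fun k => (fibr_pos k).ne'
  constructor
  · cases n with
    | zero =>
      rw [tsum_eq_single 0 (fun b hb => by simp [FhatM, hb])]
      rcases Nat.eq_zero_or_pos m with hm | hm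
      · subst hm
        norm_num [FhatM, GM, fibr]
      · have : ¬ (m ≤ 0) := by omega
        have h0 : (0 : ℕ) ≠ m := by omega
        simp [FhatM, GM, this, h0]
    | succ s =>
      have hsum : (∑' k : ℕ, FhatM (s+1) k * GM k m)
          = FhatM (s+1) s * GM s m + FhatM (s+1) (s+1) * GM (s+1) m := by
        rw [tsum_eq_sum (s := ({s, s+1} : Finset ℕ)) ?_,
          Finset.sum_pair (by omega)]
        intro b hb
        simp only [Finset.mem_insert, Finset.mem_singleton] at hb
        push_neg at hb
        have h1 : FhatM (s+1) b = 0 := by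
          simp [FhatM, hb.1, hb.2, show ¬ (b + 1 = s + 1) by omega]
        simp [h1]
      rw [hsum]
      simp only [FhatM, GM]
      split_ifs
      all_goals try omega
      all_goals try (have hm : m = s + 1 := (by omega); subst hm)
      all_goals (field_simp [hne]; try ring)
  · have hsum : (∑' k : ℕ, GM n k * FhatM k m)
        = GM n m * FhatM m m + GM n (m+1) * FhatM (m+1) m := by
      rw [tsum_eq_sum (s := ({m, m+1} : Finset ℕ)) ?_,
        Finset.sum_pair (by omega)]
      intro b hb
      simp only [Finset.mem_insert, Finset.mem_singleton] at hb
      push_neg at hb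
      have h1 : FhatM b m = 0 := by
        rw [FhatM.eq_def, if_neg (by omega : ¬ (m = b)), if_neg (by omega : ¬ (m + 1 = b))]
      simp [h1]
    rw [hsum]
    simp only [FhatM, GM]
    split_ifs
    all_goals try omega
    all_goals try (have hnm : n = m := (by omega); subst hnm)
    all_goals (field_simp [hne]; try ring)
end

section
/- If y : ℕ → ℝ is defined from x : ℕ → ℝ by y_0 = x_0 and y_n = (f_n/f_{n+1}) x_n − (f_{n+1}/f_n) x_{n-1} for n ≥ 1, then for every n, x_n = Σ_{k=0}^{n} (f_{n+1}^2/(f_k f_{k+1})) y_k. -/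
open scoped BigOperators ENNReal
open Filter Topology

theorem stmt1 (x y : ℕ → ℝ) (h0 : y 0 = x 0)
    (h : ∀ n : ℕ, 1 ≤ n → y n = fibr n / fibr (n + 1) * x n - fibr (n + 1) / fibr n * x (n - 1)) :
    ∀ n : ℕ, x n = ∑ k ∈ Finset.range (n + 1), fibr (n + 1) ^ 2 / (fibr k * fibr (k + 1)) * y k := by
  intro n
  induction n with
  | zero =>
      have h1 : fibr 0 = 1 := by norm_num [fibr]
      have h2 : fibr 1 = 1 := by norm_num [fibr]
      simp [h0, h1, h2]
  | succ n ih =>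
      have hy := h (n + 1) (Nat.le_add_left 1 n)
      simp only [Nat.add_sub_cancel] at hy
      have hpos1 := fibr_pos (n + 1)
      have hpos2 := fibr_pos (n + 2)
      have hx : x (n + 1) = fibr (n + 2) / fibr (n + 1) * y (n + 1)
          + (fibr (n + 2) / fibr (n + 1)) ^ 2 * x n := by
        field_simp at hy ⊢
        nlinarith [hy]
      rw [Finset.sum_range_succ, hx, ih, Finset.mul_sum, add_comm]
      congr 1
      · apply Finset.sum_congr rfl
        intro k hk
        have e1 : fibr (n + 1) ≠ 0 := (fibr_pos _).ne'
        have e2 : fibr k ≠ 0 := (fibr_pos _).ne'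
        have e3 : fibr (k + 1) ≠ 0 := (fibr_pos _).ne'
        field_simp
      · field_simp
end

section
/- The map x ↦ F̂x, where (F̂x)_0 = x_0 and (F̂x)_n = (f_n/f_{n+1}) x_n − (f_{n+1}/f_n) x_{n-1} for n ≥ 1, is a linear bijection from the space ℓ_p(F̂) = { x : ℕ → ℝ | F̂x ∈ ℓ_p } onto ℓ_p, and ‖x‖_{ℓ_p(F̂)} := ‖F̂x‖_{ℓ_p} defines a norm on ℓ_p(F̂) making it a Banach space, for 1 ≤ p < ∞. -/
open scoped BigOperators ENNReal
open Filter Topology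

noncomputable def Finv (y : ℕ → ℝ) : ℕ → ℝ
  | 0 => y 0
  | (n + 1) => fibr (n + 2) / fibr (n + 1) *
      (y (n + 1) + fibr (n + 2) / fibr (n + 1) * Finv y n)

lemma Fhat_Finv (y : ℕ → ℝ) : Fhat (Finv y) = y := by
  funext n
  cases n with
  | zero => simp [Fhat, Finv]
  | succ n =>
      have h1 : fibr (n + 1) ≠ 0 := (fibr_pos _).ne'
      have h2 : fibr (n + 2) ≠ 0 := (fibr_pos _).ne'
      simp only [Fhat, Finv]
      field_simp
      ring

lemma Fhat_surj : Function.Surjective Fhat := fun y => ⟨Finv y, Fhat_Finv y⟩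

lemma ellFtoLp_surj (p : ℝ≥0∞) : Function.Surjective (ellFtoLp p) := by
  intro y
  obtain ⟨x, hx⟩ := Fhat_surj (y : ℕ → ℝ)
  refine ⟨⟨x, ?_⟩, ?_⟩
  · show Fhat x ∈ lpSubmodule ℝ (fun _ : ℕ => ℝ) p
    rw [hx]; exact y.2
  · exact Subtype.ext hx

theorem stmt3 (p : ℝ≥0∞) [Fact (1 ≤ p)] (hp : p ≠ ∞) :
    ∃ e : ellF p ≃ₗ[ℝ] lp (fun _ : ℕ => ℝ) p,
      (∀ x : ellF p, ((e x : ∀ _ : ℕ, ℝ)) = Fhat (x : ℕ → ℝ)) ∧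
      (∀ x : ellF p, ‖x‖ = ‖e x‖) ∧
      CompleteSpace (ellF p) := by
  refine ⟨LinearEquiv.ofBijective (ellFtoLp p) ⟨ellFtoLp_inj p, ellFtoLp_surj p⟩,
    fun x => rfl, fun x => rfl, ?_⟩
  let li : ellF p ≃ₗᵢ[ℝ] lp (fun _ : ℕ => ℝ) p :=
    { LinearEquiv.ofBijective (ellFtoLp p) ⟨ellFtoLp_inj p, ellFtoLp_surj p⟩ with
      norm_map' := fun x => rfl }
  exact li.symm.toIsometryEquiv.completeSpace_iff.mp inferInstance
end

section
/- Let 1 < p < ∞ and q = p/(p−1). Suppose a : ℕ → ℝ is such that the sequence ā defined by ā_k = Σ_{j=k}^{∞} (f_{j+1}^2/(f_k f_{k+1})) a_j converges absolutely for each k and ā ∈ ℓ_q. Then for every x ∈ ℓ_p(F̂), the series Σ_k a_k x_k converges and Σ_k a_k x_k = Σ_k ā_k y_k, where y = F̂x ∈ ℓ_p. -/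
open scoped BigOperators ENNReal
open Filter Topology

lemma fibr_rec (n : ℕ) : fibr (n + 2) = fibr (n + 1) + fibr n := by
  show (Nat.fib (n + 3) : ℝ) = (Nat.fib (n + 2) : ℝ) + (Nat.fib (n + 1) : ℝ)
  rw [show n + 3 = (n + 1) + 2 from rfl, Nat.fib_add_two]
  push_cast; ring

lemma one_le_fibr (n : ℕ) : 1 ≤ fibr n := by
  have : 1 ≤ Nat.fib (n + 1) := Nat.fib_pos.mpr (Nat.succ_pos n)
  simp only [fibr]
  exact_mod_cast this

lemma fibr_mono (n : ℕ) : fibr n ≤ fibr (n + 1) := by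
  have : Nat.fib (n + 1) ≤ Nat.fib (n + 2) := Nat.fib_le_fib_succ
  simp only [fibr]
  exact_mod_cast this

lemma inversion (x : ℕ → ℝ) (n : ℕ) :
    x n = ∑ k ∈ Finset.range (n + 1), fibr (n + 1) ^ 2 / (fibr k * fibr (k + 1)) * Fhat x k := by
  induction n with
  | zero => simp [Fhat, fibr]
  | succ n ih =>
    have h1 : fibr (n + 1) ≠ 0 := (fibr_pos _).ne'
    have h2 : fibr (n + 2) ≠ 0 := (fibr_pos _).ne'
    rw [Finset.sum_range_succ]
    have hrw : ∑ k ∈ Finset.range (n + 1), fibr (n + 2) ^ 2 / (fibr k * fibr (k + 1)) * Fhat x k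
        = (fibr (n + 2) / fibr (n + 1)) ^ 2 *
            ∑ k ∈ Finset.range (n + 1), fibr (n + 1) ^ 2 / (fibr k * fibr (k + 1)) * Fhat x k := by
      rw [Finset.mul_sum]
      refine Finset.sum_congr rfl fun k _ => ?_
      have h3 : fibr k ≠ 0 := (fibr_pos _).ne'
      have h4 : fibr (k + 1) ≠ 0 := (fibr_pos _).ne'
      field_simp
    rw [hrw, ← ih]
    have hF : Fhat x (n + 1) = fibr (n + 1) / fibr (n + 2) * x (n + 1)
        - fibr (n + 2) / fibr (n + 1) * x n := rfl
    rw [hF]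
    field_simp
    ring

theorem stmt5 (p q : ℝ) (hp : 1 < p) (hq : q = p / (p - 1)) (a : ℕ → ℝ)
    (ha : ∀ k : ℕ, Summable fun j : ℕ => |fibr (k + j + 1) ^ 2 / (fibr k * fibr (k + 1)) * a (k + j)|)
    (habar : Summable fun k : ℕ => |abar a k| ^ q)
    (x : ℕ → ℝ) (hx : Summable fun n : ℕ => |Fhat x n| ^ p) :
    Summable (fun k : ℕ => abar a k * Fhat x k) ∧
    Tendsto (fun N : ℕ => ∑ k ∈ Finset.range N, a k * x k) atTop
      (𝓝 (∑' k : ℕ, abar a k * Fhat x k)) := by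
  have hp0 : 0 < p := lt_trans one_pos hp
  have hpq : p.HolderConjugate q := (Real.holderConjugate_iff_eq_conjExponent hp).mpr hq
  have hq1 : 1 < q := Real.HolderTriple.lt hpq.symm
  set y : ℕ → ℝ := Fhat x with hy
  set g : ℕ → ℝ := fun k => fibr k * fibr (k + 1) with hgdef
  have hgpos : ∀ k, 0 < g k := fun k => mul_pos (fibr_pos k) (fibr_pos (k + 1))
  have hgone : ∀ k, 1 ≤ g k := fun k =>
    one_le_mul_of_one_le_of_one_le (one_le_fibr k) (one_le_fibr (k + 1))
  have hg2 : ∀ k, (2 : ℝ) ^ k ≤ g k := by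
    intro k
    induction k with
    | zero => simpa [hgdef, fibr] using le_refl (1:ℝ)
    | succ k ihk =>
      have hstep : 2 * g k ≤ g (k + 1) := by
        have h1 : 2 * fibr k ≤ fibr (k + 2) := by
          rw [fibr_rec]
          nlinarith [fibr_mono k]
        have h2 : 0 < fibr (k + 1) := fibr_pos _
        calc 2 * g k = (2 * fibr k) * fibr (k + 1) := by rw [hgdef]; ring
          _ ≤ fibr (k + 2) * fibr (k + 1) := by nlinarith
          _ = g (k + 1) := by rw [hgdef]; ring
      calc (2:ℝ) ^ (k + 1) = 2 * 2 ^ k := by ring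
        _ ≤ 2 * g k := by nlinarith
        _ ≤ g (k + 1) := hstep
  have hginv : Summable fun k => (g k)⁻¹ := by
    refine Summable.of_nonneg_of_le (fun k => le_of_lt (inv_pos.mpr (hgpos k)))
      (fun k => ?_) (summable_geometric_of_lt_one (by norm_num) (by norm_num : (1/2 : ℝ) < 1))
    have h1 : (2:ℝ) ^ k ≤ g k := hg2 k
    have h2 : (0:ℝ) < 2 ^ k := by positivity
    rw [show ((1:ℝ)/2) ^ k = ((2:ℝ) ^ k)⁻¹ by rw [one_div, inv_pow]]
    exact inv_anti₀ h2 h1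
  set b : ℕ → ℝ := fun n => fibr (n + 1) ^ 2 * a n with hbdef
  have hbabs : Summable fun n => |b n| := by
    have := ha 0
    simp only [zero_add] at this
    refine this.congr fun n => ?_
    have : fibr 0 * fibr 1 = 1 := by norm_num [fibr]
    rw [this, div_one, hbdef]
  have hbsum : Summable b := hbabs.of_abs
  set S : ℝ := ∑' n, b n with hSdef
  set T : ℕ → ℝ := fun k => ∑' j, b (k + j) with hTdef
  have hTk : ∀ k, T k = S - ∑ n ∈ Finset.range k, b n := by
    intro k
    have h1 : (∑ n ∈ Finset.range k, b n) + (∑' j, b (j + k)) = S := Summable.sum_add_tsum_nat_add k hbsum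
    have h2 : T k = ∑' j, b (j + k) := tsum_congr fun j => by rw [add_comm]
    rw [h2]; linarith
  have habarT : ∀ k, abar a k = (g k)⁻¹ * T k := by
    intro k
    rw [abar, hTdef]
    rw [← tsum_mul_left]
    refine tsum_congr fun j => ?_
    rw [hbdef, hgdef]
    field_simp
  have hyabs : ∀ k, |abar a k * y k| ≤ |y k| ^ p / p + |abar a k| ^ q / q := by
    intro k
    rw [abs_mul, mul_comm]
    exact Real.young_inequality_of_nonneg (abs_nonneg _) (abs_nonneg _) hpq
  have hsum1 : Summable fun k => abar a k * y k := by
    refine Summable.of_abs (Summable.of_nonneg_of_le (fun k => abs_nonneg _) hyabs ?_)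
    exact (hx.div_const p).add (habar.div_const q)
  have hsum2 : Summable fun k => y k / g k := by
    refine Summable.of_abs (Summable.of_nonneg_of_le (fun k => abs_nonneg _) (fun k => ?_)
      ((hx.div_const p).add (hginv.div_const q)))
    have h1 : |y k / g k| = |y k| * (g k)⁻¹ := by
      rw [abs_div, abs_of_pos (hgpos k), div_eq_mul_inv]
    rw [h1]
    have h2 : |y k| * (g k)⁻¹ ≤ |y k| ^ p / p + ((g k)⁻¹) ^ q / q :=
      Real.young_inequality_of_nonneg (abs_nonneg _) (le_of_lt (inv_pos.mpr (hgpos k))) hpq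
    have h3 : ((g k)⁻¹) ^ q ≤ (g k)⁻¹ := by
      have hx1 : (g k)⁻¹ ≤ 1 := inv_le_one_of_one_le₀ (hgone k)
      have hx0 : 0 < (g k)⁻¹ := inv_pos.mpr (hgpos k)
      calc ((g k)⁻¹) ^ q ≤ ((g k)⁻¹) ^ (1:ℝ) :=
            Real.rpow_le_rpow_of_exponent_ge hx0 hx1 (le_of_lt hq1)
        _ = (g k)⁻¹ := Real.rpow_one _
    have hq0 : (0:ℝ) < q := lt_trans one_pos hq1
    have h4 : ((g k)⁻¹) ^ q / q ≤ (g k)⁻¹ / q := by gcongr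
    linarith
  have key : ∀ N, ∑ n ∈ Finset.range N, a n * x n
      = ∑ k ∈ Finset.range N, y k / g k * (T k - T N) := by
    intro N
    induction N with
    | zero => simp
    | succ N ih =>
      rw [Finset.sum_range_succ, ih]
      have hxN : a N * x N = b N * ∑ k ∈ Finset.range (N + 1), y k / g k := by
        rw [inversion x N, Finset.mul_sum, Finset.mul_sum]
        refine Finset.sum_congr rfl fun k _ => ?_
        have h3 : fibr k ≠ 0 := (fibr_pos _).ne'
        have h4 : fibr (k + 1) ≠ 0 := (fibr_pos _).ne'
        rw [hbdef, hgdef, hy]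
        field_simp
      have hTdiff : T N - T (N + 1) = b N := by
        rw [hTk N, hTk (N + 1), Finset.sum_range_succ]; ring
      rw [hxN]
      rw [Finset.sum_range_succ (f := fun k => y k / g k * (T k - T (N + 1)))]
      have hterm : ∀ k, y k / g k * (T k - T (N + 1))
          = y k / g k * (T k - T N) + y k / g k * b N := by
        intro k; rw [← hTdiff]; ring
      simp only [hterm]
      rw [Finset.sum_add_distrib, Finset.sum_range_succ (f := fun k => y k / g k),
        ← Finset.sum_mul]
      ring
  have key2 : ∀ N, ∑ n ∈ Finset.range N, a n * x n
      = (∑ k ∈ Finset.range N, abar a k * y k)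
        - T N * ∑ k ∈ Finset.range N, y k / g k := by
    intro N
    rw [key N, Finset.mul_sum, ← Finset.sum_sub_distrib]
    refine Finset.sum_congr rfl fun k _ => ?_
    rw [habarT k]
    ring
  refine ⟨hsum1, ?_⟩
  have h1 : Tendsto (fun N => ∑ k ∈ Finset.range N, abar a k * y k) atTop
      (𝓝 (∑' k, abar a k * y k)) := hsum1.hasSum.tendsto_sum_nat
  have hT0 : Tendsto T atTop (𝓝 0) := by
    have hP : Tendsto (fun N => ∑ n ∈ Finset.range N, b n) atTop (𝓝 S) :=
      hbsum.hasSum.tendsto_sum_nat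
    have := (tendsto_const_nhds (x := S) (f := atTop)).sub hP
    rw [sub_self] at this
    refine this.congr fun N => (hTk N).symm
  have h2 : Tendsto (fun N => T N * ∑ k ∈ Finset.range N, y k / g k) atTop (𝓝 0) := by
    have := hT0.mul hsum2.hasSum.tendsto_sum_nat
    simpa using this
  have hfinal := h1.sub h2
  rw [sub_zero] at hfinal
  refine hfinal.congr fun N => (key2 N).symm
end

section
/- Let a : ℕ → ℝ and define ā_k = Σ_{j=k}^∞ (f_{j+1}^2/(f_k f_{k+1})) a_j, assumed to converge absolutely with ā ∈ ℓ_1. Then the operator norm of the continuous linear functional x ↦ Σ_k a_k x_k on ℓ_∞(F̂) equals Σ_k |ā_k|. -/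
open scoped BigOperators ENNReal
open Filter Topology

instance factTop : Fact ((1 : ℝ≥0∞) ≤ ∞) := ⟨le_top⟩

lemma sign_abs_le (r : ℝ) : |Real.sign r| ≤ 1 := by
  rcases lt_trichotomy r 0 with h | h | h
  · simp [Real.sign_of_neg h]
  · simp [h]
  · simp [Real.sign_of_pos h]

lemma mul_sign (r : ℝ) : r * Real.sign r = |r| := by
  rcases lt_trichotomy r 0 with h | h | h
  · simp [Real.sign_of_neg h, abs_of_neg h]
  · simp [h]
  · simp [Real.sign_of_pos h, abs_of_pos h]

theorem stmt6 (a : ℕ → ℝ)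
    (ha : ∀ k : ℕ, Summable fun j : ℕ => |fibr (k + j + 1) ^ 2 / (fibr k * fibr (k + 1)) * a (k + j)|)
    (habar : Summable fun k : ℕ => |abar a k|)
    (hrep : ∀ x : ellF ∞, Summable (fun k : ℕ => a k * (x : ℕ → ℝ) k) ∧
      ∑' k : ℕ, a k * (x : ℕ → ℝ) k = ∑' k : ℕ, abar a k * Fhat (x : ℕ → ℝ) k) :
    sSup {c : ℝ | ∃ x : ellF ∞, ‖x‖ ≤ 1 ∧ c = |∑' k : ℕ, a k * (x : ℕ → ℝ) k|} =
      ∑' k : ℕ, |abar a k| := by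
  set T : ℝ := ∑' k : ℕ, |abar a k| with hT
  -- upper bound for every element of the set
  have hub : ∀ c ∈ {c : ℝ | ∃ x : ellF ∞, ‖x‖ ≤ 1 ∧ c = |∑' k : ℕ, a k * (x : ℕ → ℝ) k|},
      c ≤ T := by
    rintro c ⟨x, hx, rfl⟩
    rw [(hrep x).2]
    have hb : ∀ k, |Fhat (x : ℕ → ℝ) k| ≤ 1 := by
      intro k
      have := lp.norm_apply_le_norm (by norm_num : (∞ : ℝ≥0∞) ≠ 0) (ellFtoLp ∞ x) k
      have hnx : ‖ellFtoLp ∞ x‖ = ‖x‖ := rfl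
      calc |Fhat (x : ℕ → ℝ) k| = ‖(ellFtoLp ∞ x) k‖ := rfl
        _ ≤ ‖ellFtoLp ∞ x‖ := this
        _ ≤ 1 := by rw [hnx]; exact hx
    have hle : ∀ k, |abar a k * Fhat (x : ℕ → ℝ) k| ≤ |abar a k| := by
      intro k
      rw [abs_mul]
      calc |abar a k| * |Fhat (x : ℕ → ℝ) k| ≤ |abar a k| * 1 :=
            mul_le_mul_of_nonneg_left (hb k) (abs_nonneg _)
        _ = |abar a k| := mul_one _
    have hsum : Summable (fun k => abar a k * Fhat (x : ℕ → ℝ) k) := by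
      apply Summable.of_abs
      exact Summable.of_nonneg_of_le (fun k => abs_nonneg _) hle habar
    calc |∑' k, abar a k * Fhat (x : ℕ → ℝ) k| ≤ ∑' k, |abar a k * Fhat (x : ℕ → ℝ) k| := by
          simpa [Real.norm_eq_abs, abs_mul] using
            norm_tsum_le_tsum_norm (f := fun k => abar a k * Fhat (x : ℕ → ℝ) k)
              (by simpa [Real.norm_eq_abs, abs_mul] using hsum.abs)
      _ ≤ T := Summable.tsum_le_tsum hle hsum.abs habar
      
  -- the witness achieving the bound
  set y : ℕ → ℝ := fun k => Real.sign (abar a k) with hy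
  have hmem : (Finv y : PreLp (fun _ : ℕ => ℝ)) ∈ ellF ∞ := by
    show Memℓp (Fhat (Finv y)) ∞
    rw [Fhat_Finv]
    apply memℓp_infty
    refine ⟨1, ?_⟩
    rintro r ⟨k, rfl⟩
    exact sign_abs_le _
  set x : ellF ∞ := ⟨Finv y, hmem⟩ with hxdef
  have hxcoe : (x : ℕ → ℝ) = Finv y := rfl
  have hxnorm : ‖x‖ ≤ 1 := by
    show ‖ellFtoLp ∞ x‖ ≤ 1
    apply lp.norm_le_of_forall_le zero_le_one
    intro k
    show ‖Fhat (x : ℕ → ℝ) k‖ ≤ 1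
    rw [hxcoe, Fhat_Finv]
    exact sign_abs_le _
  have hval : |∑' k : ℕ, a k * (x : ℕ → ℝ) k| = T := by
    rw [(hrep x).2, hxcoe, Fhat_Finv]
    have : ∀ k, abar a k * y k = |abar a k| := fun k => mul_sign _
    rw [tsum_congr this]
    exact abs_of_nonneg (tsum_nonneg fun k => abs_nonneg _)
  have hmemT : T ∈ {c : ℝ | ∃ x : ellF ∞, ‖x‖ ≤ 1 ∧ c = |∑' k : ℕ, a k * (x : ℕ → ℝ) k|} :=
    ⟨x, hxnorm, hval.symm⟩
  exact le_antisymm (csSup_le ⟨T, hmemT⟩ hub) (le_csSup ⟨T, hub⟩ hmemT)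
end

section
/- Let 1 < p < ∞, q = p/(p−1), and let a : ℕ → ℝ with ā_k = Σ_{j=k}^∞ (f_{j+1}^2/(f_k f_{k+1})) a_j absolutely convergent for each k and ā ∈ ℓ_q. Then sup over x in the unit sphere of ℓ_p(F̂) of |Σ_k a_k x_k| equals (Σ_k |ā_k|^q)^{1/q}. -/
open scoped BigOperators ENNReal
open Filter Topology

lemma real_sign_mul_self (r : ℝ) : Real.sign r * r = |r| := by
  rcases lt_trichotomy r 0 with h | h | h
  · rw [Real.sign_of_neg h, abs_of_neg h]; ring
  · simp [h]
  · rw [Real.sign_of_pos h, abs_of_pos h]; ring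

lemma abs_sign_mul (r s : ℝ) : |Real.sign r * s| = |Real.sign r| * |s| := abs_mul _ _

theorem stmt7 (p q : ℝ) (hp : 1 < p) (hq : q = p / (p - 1)) [Fact (1 ≤ ENNReal.ofReal p)]
    (a : ℕ → ℝ)
    (ha : ∀ k : ℕ, Summable fun j : ℕ => |fibr (k + j + 1) ^ 2 / (fibr k * fibr (k + 1)) * a (k + j)|)
    (habar : Summable fun k : ℕ => |abar a k| ^ q)
    (hrep : ∀ x : ellF (ENNReal.ofReal p), Summable (fun k : ℕ => a k * (x : ℕ → ℝ) k) ∧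
      ∑' k : ℕ, a k * (x : ℕ → ℝ) k = ∑' k : ℕ, abar a k * Fhat (x : ℕ → ℝ) k) :
    sSup {c : ℝ | ∃ x : ellF (ENNReal.ofReal p), ‖x‖ = 1 ∧ c = |∑' k : ℕ, a k * (x : ℕ → ℝ) k|} =
      (∑' k : ℕ, |abar a k| ^ q) ^ (1 / q) := by
  have hp0 : (0:ℝ) < p := lt_trans one_pos hp
  have hpq : p.HolderConjugate q := (Real.holderConjugate_iff_eq_conjExponent hp).2 hq
  have hq1 : 1 < q := hpq.symm.lt
  have hq0 : (0:ℝ) < q := hpq.symm.pos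
  set P := ENNReal.ofReal p with hPdef
  set Q := ENNReal.ofReal q with hQdef
  have hPtoReal : P.toReal = p := ENNReal.toReal_ofReal hp0.le
  have hQtoReal : Q.toReal = q := ENNReal.toReal_ofReal hq0.le
  have hconj : P.toReal.HolderConjugate Q.toReal := by rw [hPtoReal, hQtoReal]; exact hpq
  haveI : Fact (1 ≤ Q) := ⟨by
    rw [hQdef, ← ENNReal.ofReal_one]; exact ENNReal.ofReal_le_ofReal hq1.le⟩
  -- abar as an element of lp Q
  have habarmem : Memℓp (abar a) Q := by
    apply memℓp_gen
    rw [hQtoReal]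
    simpa only [Real.norm_eq_abs] using habar
  set A : lp (fun _ : ℕ => ℝ) Q := ⟨abar a, habarmem⟩ with hAdef
  set S : ℝ := ∑' k, |abar a k| ^ q with hSdef
  have hAk : ∀ k, A k = abar a k := fun k => rfl
  have hAnorm : ‖A‖ = S ^ (1/q) := by
    rw [lp.norm_eq_tsum_rpow (by rw [hQtoReal]; exact hq0) A]
    rw [hQtoReal]
    congr 1
  have hSnonneg : 0 ≤ S := tsum_nonneg fun k => Real.rpow_nonneg (abs_nonneg _) _
  -- norm on ellF is via ellFtoLp
  have hnorm_ellF : ∀ x : ellF P, ‖x‖ = ‖ellFtoLp P x‖ := fun x => rfl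
  have hellFtoLp_apply : ∀ (x : ellF P) (k : ℕ), (ellFtoLp P x) k = Fhat (x : ℕ → ℝ) k :=
    fun x k => rfl
  -- Upper bound for every element of the set
  have hub : ∀ c ∈ {c : ℝ | ∃ x : ellF P, ‖x‖ = 1 ∧
      c = |∑' k : ℕ, a k * (x : ℕ → ℝ) k|}, c ≤ S ^ (1/q) := by
    rintro c ⟨x, hx1, rfl⟩
    set Y : lp (fun _ : ℕ => ℝ) P := ellFtoLp P x with hYdef
    have hsum : Summable fun k => ‖Y k‖ * ‖A k‖ := lp.summable_mul hconj Y A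
    have hYk : ∀ k, Y k = Fhat (x : ℕ → ℝ) k := fun k => rfl
    have hsum2 : Summable fun k : ℕ => ‖abar a k * Fhat (x : ℕ → ℝ) k‖ := by
      refine hsum.congr fun k => ?_
      rw [hYk k, hAk k, Real.norm_eq_abs, Real.norm_eq_abs, Real.norm_eq_abs, abs_mul,
        mul_comm]
    calc |∑' k : ℕ, a k * (x : ℕ → ℝ) k|
        = |∑' k : ℕ, abar a k * Fhat (x : ℕ → ℝ) k| := by rw [(hrep x).2]
      _ ≤ ∑' k : ℕ, ‖abar a k * Fhat (x : ℕ → ℝ) k‖ := norm_tsum_le_tsum_norm hsum2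
      _ = ∑' k : ℕ, ‖Y k‖ * ‖A k‖ := by
          refine tsum_congr fun k => ?_
          rw [hYk k, hAk k, Real.norm_eq_abs, Real.norm_eq_abs, Real.norm_eq_abs, abs_mul,
            mul_comm]
      _ ≤ ‖Y‖ * ‖A‖ := lp.tsum_mul_le_mul_norm' hconj Y A
      _ = S ^ (1/q) := by
          have hY1 : ‖Y‖ = 1 := by rw [hYdef, ← hnorm_ellF x, hx1]
          rw [hY1, hAnorm, one_mul]
  -- construction of a unit vector from an lp function
  have hmk : ∀ (g : ℕ → ℝ), Memℓp g P → ∃ x : ellF P,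
      Fhat (x : ℕ → ℝ) = g ∧ ‖x‖ = (∑' k, |g k| ^ p) ^ (1/p) := by
    intro g hg
    have hmem : Finv g ∈ ellF P := by
      show Fhat (Finv g) ∈ lpSubmodule ℝ (fun _ : ℕ => ℝ) P
      rw [Fhat_Finv]
      exact hg
    refine ⟨⟨Finv g, hmem⟩, Fhat_Finv g, ?_⟩
    have : ellFtoLp P ⟨Finv g, hmem⟩ = (⟨g, hg⟩ : lp (fun _ : ℕ => ℝ) P) :=
      Subtype.ext (Fhat_Finv g)
    rw [hnorm_ellF, this, lp.norm_eq_tsum_rpow (by rw [hPtoReal]; exact hp0), hPtoReal]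
    simp only [Real.norm_eq_abs]
  by_cases hS0 : S = 0
  · -- degenerate case : abar = 0
    have habar0 : ∀ k, abar a k = 0 := by
      intro k
      have h1 : |abar a k| ^ q ≤ S := habar.le_tsum k fun j _ =>
        Real.rpow_nonneg (abs_nonneg _) _
      have h2 : |abar a k| ^ q = 0 :=
        le_antisymm (hS0 ▸ h1) (Real.rpow_nonneg (abs_nonneg _) _)
      have := (Real.rpow_eq_zero (abs_nonneg _) hq0.ne').1 h2
      exact abs_eq_zero.1 this
    have hval : ∀ x : ellF P, ∑' k : ℕ, a k * (x : ℕ → ℝ) k = 0 := by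
      intro x
      rw [(hrep x).2]
      simp [habar0]
    -- a unit vector
    set g : ℕ → ℝ := fun k => if k = 0 then 1 else 0 with hgdef
    have hgsum : Summable fun k => |g k| ^ p := by
      apply summable_of_ne_finset_zero (s := {0})
      intro k hk
      have : g k = 0 := by simp [hgdef, Finset.mem_singleton.not.1 hk]
      rw [this, abs_zero, Real.zero_rpow hp0.ne']
    have hgmem : Memℓp g P := by
      apply memℓp_gen
      rw [hPtoReal]
      simpa only [Real.norm_eq_abs] using hgsum
    have hgtsum : (∑' k, |g k| ^ p) = 1 := by
      rw [tsum_eq_single 0 (fun b hb => by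
        simp [hgdef, hb, abs_zero, Real.zero_rpow hp0.ne'])]
      simp [hgdef, Real.one_rpow]
    obtain ⟨x, hxF, hxn⟩ := hmk g hgmem
    rw [hgtsum, Real.one_rpow] at hxn
    have hmemset : (0:ℝ) ∈ {c : ℝ | ∃ x : ellF P, ‖x‖ = 1 ∧
        c = |∑' k : ℕ, a k * (x : ℕ → ℝ) k|} := ⟨x, hxn, by rw [hval x, abs_zero]⟩
    have hset : {c : ℝ | ∃ x : ellF P, ‖x‖ = 1 ∧
        c = |∑' k : ℕ, a k * (x : ℕ → ℝ) k|} = {0} := by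
      apply Set.eq_singleton_iff_unique_mem.2
      refine ⟨hmemset, ?_⟩
      rintro c ⟨x, -, rfl⟩
      rw [hval x, abs_zero]
    rw [hset, csSup_singleton, hS0, Real.zero_rpow (one_div_ne_zero hq0.ne')]
  · -- main case
    have hSpos : 0 < S := lt_of_le_of_ne hSnonneg (Ne.symm hS0)
    set g : ℕ → ℝ := fun k => Real.sign (abar a k) * |abar a k| ^ (q - 1) / S ^ (1/p)
      with hgdef
    have hSp_pos : 0 < S ^ (1/p) := Real.rpow_pos_of_pos hSpos _
    have habs : ∀ k, |g k| ^ p = |abar a k| ^ q / S := by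
      intro k
      have h1 : |g k| = |abar a k| ^ (q - 1) / S ^ (1/p) := by
        rw [hgdef]
        simp only [abs_div, abs_mul, abs_of_pos hSp_pos,
          abs_of_nonneg (Real.rpow_nonneg (abs_nonneg (abar a k)) (q - 1))]
        rcases lt_trichotomy (abar a k) 0 with h | h | h
        · rw [Real.sign_of_neg h, abs_neg, abs_one, one_mul]
        · rw [h]; simp [Real.zero_rpow (by linarith : q - 1 ≠ 0)]
        · rw [Real.sign_of_pos h, abs_one, one_mul]
      rw [h1, Real.div_rpow (Real.rpow_nonneg (abs_nonneg _) _) hSp_pos.le,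
        ← Real.rpow_mul (abs_nonneg _), ← Real.rpow_mul hSnonneg,
        (hpq.symm : q.HolderConjugate p).sub_one_mul_conj, one_div_mul_cancel hp0.ne', Real.rpow_one]
    have hgsum : Summable fun k => |g k| ^ p :=
      (habar.div_const S).congr fun k => (habs k).symm
    have hgmem : Memℓp g P := by
      apply memℓp_gen
      rw [hPtoReal]
      simpa only [Real.norm_eq_abs] using hgsum
    have hgtsum : (∑' k, |g k| ^ p) = 1 := by
      rw [tsum_congr habs, tsum_div_const, ← hSdef, div_self hS0]
    obtain ⟨x, hxF, hxn⟩ := hmk g hgmem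
    rw [hgtsum, Real.one_rpow] at hxn
    have hvg : ∀ k, abar a k * g k = |abar a k| ^ q / S ^ (1/p) := by
      intro k
      by_cases h : abar a k = 0
      · simp [hgdef, h, Real.zero_rpow hq0.ne']
      · have hpos : 0 < |abar a k| := abs_pos.2 h
        have e : |abar a k| ^ (1 + (q - 1)) = |abar a k| * |abar a k| ^ (q - 1) := by
          rw [Real.rpow_add hpos, Real.rpow_one]
        rw [show (1:ℝ) + (q - 1) = q by ring] at e
        show abar a k * (Real.sign (abar a k) * |abar a k| ^ (q - 1) / S ^ (1/p)) = _
        rw [← mul_div_assoc, ← mul_assoc, mul_comm (abar a k) (Real.sign _),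
          real_sign_mul_self, ← e]
    have h1q : (1:ℝ)/q = 1 - 1/p := by
      rw [one_div, one_div]
      linarith [hpq.inv_add_inv_eq_one]
    have hvsum : ∑' k, abar a k * g k = S ^ ((1:ℝ)/q) := by
      rw [tsum_congr hvg, tsum_div_const, ← hSdef, h1q, Real.rpow_sub hSpos, Real.rpow_one]
    have hmemset : S ^ ((1:ℝ)/q) ∈ {c : ℝ | ∃ x : ellF P, ‖x‖ = 1 ∧
        c = |∑' k : ℕ, a k * (x : ℕ → ℝ) k|} := by
      refine ⟨x, hxn, ?_⟩
      have h2 : ∑' k, abar a k * Fhat (x : ℕ → ℝ) k = S ^ ((1:ℝ)/q) := by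
        rw [hxF]; exact hvsum
      rw [(hrep x).2, h2, abs_of_nonneg (Real.rpow_nonneg hSnonneg _)]
    apply le_antisymm
    · exact csSup_le ⟨_, hmemset⟩ hub
    · exact le_csSup ⟨S ^ ((1:ℝ)/q), hub⟩ hmemset
end

section
/- Let a : ℕ → ℝ with ā_k = Σ_{j=k}^∞ (f_{j+1}^2/(f_k f_{k+1})) a_j absolutely convergent for each k and ā bounded. Then the norm of the linear functional x ↦ Σ_k a_k x_k on ℓ_1(F̂) equals sup_k |ā_k|. -/
open scoped BigOperators ENNReal
open Filter Topology

instance factOne : Fact ((1 : ℝ≥0∞) ≤ 1) := ⟨le_rfl⟩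

noncomputable def ekv (k : ℕ) : ℕ → ℝ :=
  fun n => if k ≤ n then fibr (n + 1) ^ 2 / (fibr k * fibr (k + 1)) else 0

lemma Fhat_ekv (k : ℕ) : Fhat (ekv k) = fun n => if n = k then (1:ℝ) else 0 := by
  funext n
  cases n with
  | zero =>
    cases k with
    | zero => norm_num [Fhat, ekv, fibr]
    | succ m => simp [Fhat, ekv]
  | succ n =>
    rcases lt_trichotomy (n+1) k with h | h | h
    · have h1 : ¬ k ≤ n + 1 := not_le.mpr h
      have h2 : ¬ k ≤ n := by omega
      have h3 : n + 1 ≠ k := by omega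
      simp [Fhat, ekv, h1, h2, h3]
    · subst h
      have h2 : ¬ (n+1) ≤ n := by omega
      have p1 := (fibr_pos (n+1)).ne'
      have p2 := (fibr_pos (n+2)).ne'
      simp only [Fhat, ekv, le_refl, if_pos, if_neg h2, if_pos rfl]
      field_simp
      ring
    · have h2 : k ≤ n := by omega
      have hne : n + 1 ≠ k := by omega
      have p1 := (fibr_pos (n+1)).ne'
      have p2 := (fibr_pos (n+2)).ne'
      have pk := (fibr_pos k).ne'
      have pk1 := (fibr_pos (k+1)).ne'
      simp only [Fhat, ekv, if_pos (h2.trans (Nat.le_succ n)), if_pos h2, if_neg hne]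
      field_simp
      ring

lemma mem_ellF_ekv (k : ℕ) : ekv k ∈ ellF 1 := by
  change Memℓp (Fhat (ekv k)) 1
  rw [Fhat_ekv]
  refine (memℓp_zero ?_).of_exponent_ge zero_le
  apply (Set.finite_singleton k).subset
  intro n hn
  simp only [Set.mem_setOf_eq, ne_eq, ite_eq_right_iff, not_forall] at hn
  simp [hn.1]

lemma norm_xk (k : ℕ) : ‖(⟨ekv k, mem_ellF_ekv k⟩ : ellF 1)‖ = 1 := by
  have h : ‖(⟨ekv k, mem_ellF_ekv k⟩ : ellF 1)‖
      = ‖(ellFtoLp 1) ⟨ekv k, mem_ellF_ekv k⟩‖ := rfl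
  rw [h]
  have h2 : (ellFtoLp 1) ⟨ekv k, mem_ellF_ekv k⟩
      = lp.single 1 k ((fun _ : ℕ => (1:ℝ)) k) := by
    apply Subtype.ext
    funext n
    show Fhat (ekv k) n = _
    rw [Fhat_ekv]
    by_cases hn : n = k
    · subst hn; simp [lp.single_apply_self]
    · simp [lp.single_apply_ne _ _ _ hn, hn]
  rw [h2]
  have h3 := lp.norm_single (E := fun _ : ℕ => ℝ) (p := 1)
    (by norm_num : (0:ℝ≥0∞) < 1) k ((fun _ : ℕ => (1:ℝ)) k)
  simpa using h3

theorem stmt8 (a : ℕ → ℝ)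
    (ha : ∀ k : ℕ, Summable fun j : ℕ => |fibr (k + j + 1) ^ 2 / (fibr k * fibr (k + 1)) * a (k + j)|)
    (habar : BddAbove (Set.range fun k : ℕ => |abar a k|))
    (hrep : ∀ x : ellF 1, Summable (fun k : ℕ => a k * (x : ℕ → ℝ) k) ∧
      ∑' k : ℕ, a k * (x : ℕ → ℝ) k = ∑' k : ℕ, abar a k * Fhat (x : ℕ → ℝ) k) :
    sSup {c : ℝ | ∃ x : ellF 1, ‖x‖ ≤ 1 ∧ c = |∑' k : ℕ, a k * (x : ℕ → ℝ) k|} =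
      ⨆ k : ℕ, |abar a k| := by
  set M := ⨆ k : ℕ, |abar a k| with hM
  have hMk : ∀ k, |abar a k| ≤ M := fun k => le_ciSup habar k
  have hM0 : (0:ℝ) ≤ M := (abs_nonneg _).trans (hMk 0)
  set S := {c : ℝ | ∃ x : ellF 1, ‖x‖ ≤ 1 ∧ c = |∑' k : ℕ, a k * (x : ℕ → ℝ) k|} with hS
  -- upper bound
  have hub : ∀ c ∈ S, c ≤ M := by
    rintro c ⟨x, hx1, rfl⟩
    rw [(hrep x).2]
    set y := Fhat (x : ℕ → ℝ) with hy
    have hmem : Memℓp y 1 := x.2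
    have hysum : Summable fun k => ‖y k‖ := by
      have := hmem.summable (by norm_num : (0:ℝ) < (1:ℝ≥0∞).toReal)
      simpa using this
    have hnorm : ∑' k, ‖y k‖ = ‖x‖ := by
      have h : ‖x‖ = ‖(ellFtoLp 1) x‖ := rfl
      rw [h, lp.norm_eq_tsum_rpow (by norm_num : (0:ℝ) < (1:ℝ≥0∞).toReal)]
      simp [ellFtoLp, hy]
    have hsum2 : Summable fun k => ‖abar a k * y k‖ := by
      refine Summable.of_nonneg_of_le (fun k => norm_nonneg _) (fun k => ?_)
        (hysum.mul_left M)
      rw [norm_mul]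
      exact mul_le_mul_of_nonneg_right ((hMk k).trans_eq rfl) (norm_nonneg _)
        |>.trans_eq' (by simp only [Real.norm_eq_abs])
    calc |∑' k, abar a k * y k| ≤ ∑' k, ‖abar a k * y k‖ := by
          simpa using norm_tsum_le_tsum_norm hsum2
      _ ≤ ∑' k, M * ‖y k‖ := by
          refine Summable.tsum_le_tsum (fun k => ?_) hsum2 (hysum.mul_left M)
          rw [norm_mul, Real.norm_eq_abs]
          exact mul_le_mul_of_nonneg_right (hMk k) (norm_nonneg _)
      _ = M * ∑' k, ‖y k‖ := tsum_mul_left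
      _ = M * ‖x‖ := by rw [hnorm]
      _ ≤ M * 1 := mul_le_mul_of_nonneg_left hx1 hM0
      _ = M := mul_one M
  have hSne : S.Nonempty := ⟨_, ⟨0, by simp, rfl⟩⟩
  have hSbdd : BddAbove S := ⟨M, hub⟩
  refine le_antisymm (csSup_le hSne hub) (ciSup_le fun k => le_csSup hSbdd ?_)
  refine ⟨⟨ekv k, mem_ellF_ekv k⟩, le_of_eq (norm_xk k), ?_⟩
  have h2 := (hrep ⟨ekv k, mem_ellF_ekv k⟩).2
  have h3 : (∑' j : ℕ, abar a j * Fhat ((⟨ekv k, mem_ellF_ekv k⟩ : ellF 1) : ℕ → ℝ) j)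
      = abar a k := by
    have hc : ((⟨ekv k, mem_ellF_ekv k⟩ : ellF 1) : ℕ → ℝ) = ekv k := rfl
    rw [hc, Fhat_ekv]
    rw [tsum_eq_single k (fun j hj => by simp [hj])]
    simp
  rw [h2, h3]
end

section
/- Let 1 ≤ p < ∞ and let A be a matrix inducing a bounded operator L_A : ℓ_1(F̂) → ℓ_p, with associated matrix ā_{nk} = Σ_{j=k}^∞ (f_{j+1}^2/(f_k f_{k+1})) a_{nj}. Then the operator norm satisfies ‖L_A‖ = sup_k (Σ_n |ā_{nk}|^p)^{1/p} < ∞. -/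
open scoped BigOperators ENNReal
open Filter Topology

noncomputable def xk (k : ℕ) : ℕ → ℝ :=
  fun j => if k ≤ j then fibr (j + 1) ^ 2 / (fibr k * fibr (k + 1)) else 0

lemma Fhat_xk (k : ℕ) : Fhat (xk k) = Pi.single k 1 := by
  funext n
  cases n with
  | zero =>
      rcases Nat.eq_zero_or_pos k with rfl | hk
      · simp [Fhat, xk, fibr]
      · have h1 : ¬ (k ≤ 0) := by omega
        have h2 : (0 : ℕ) ≠ k := by omega
        simp [Fhat, xk, h1, Pi.single_eq_of_ne h2]
  | succ n =>
      rcases lt_trichotomy (n + 1) k with h | h | h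
      · have h1 : ¬ (k ≤ n + 1) := by omega
        have h2 : ¬ (k ≤ n) := by omega
        have h3 : (n + 1 : ℕ) ≠ k := by omega
        simp [Fhat, xk, h1, h2, Pi.single_eq_of_ne h3]
      · subst h
        have h2 : ¬ (n + 1 ≤ n) := by omega
        have e1 := (fibr_pos (n + 1)).ne'
        have e2 := (fibr_pos (n + 2)).ne'
        simp only [Fhat, xk, le_refl, if_true, h2, if_false, mul_zero, sub_zero,
          Pi.single_eq_same]
        field_simp
      · have h1 : k ≤ n + 1 := by omega
        have h2 : k ≤ n := by omega
        have h3 : (n + 1 : ℕ) ≠ k := by omega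
        have e1 := (fibr_pos (n + 1)).ne'
        have e2 := (fibr_pos (n + 2)).ne'
        have e3 := (fibr_pos k).ne'
        have e4 := (fibr_pos (k + 1)).ne'
        simp only [Fhat, xk, h1, h2, if_true, Pi.single_eq_of_ne h3]
        field_simp
        ring

lemma xk_mem (k : ℕ) : (xk k : PreLp (fun _ : ℕ => ℝ)) ∈ ellF 1 := by
  show Memℓp (Fhat (xk k)) 1
  rw [Fhat_xk]
  refine (memℓp_zero ?_).of_exponent_ge (zero_le (a := (1 : ℝ≥0∞)))
  refine (Set.finite_singleton k).subset ?_
  intro j hj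
  by_contra hjk
  exact hj (Pi.single_eq_of_ne hjk 1)

noncomputable def ek (k : ℕ) : ellF 1 := ⟨xk k, xk_mem k⟩

lemma ellFtoLp_ek (k : ℕ) : ellFtoLp 1 (ek k) = lp.single 1 k (1 : ℝ) := by
  apply Subtype.ext
  show Fhat (xk k) = _
  rw [Fhat_xk]
  funext j
  rcases eq_or_ne j k with rfl | hj
  · simp [lp.single_apply_self]
  · simp [lp.single_apply_ne _ _ _ hj, Pi.single_eq_of_ne hj]

lemma norm_ek (k : ℕ) : ‖ek k‖ = 1 := by
  show ‖ellFtoLp 1 (ek k)‖ = 1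
  rw [ellFtoLp_ek]
  simpa using lp.norm_single (p := (1 : ℝ≥0∞)) (by norm_num) (fun _ : ℕ => (1 : ℝ)) k

lemma norm_ellF (x : ellF 1) : ‖x‖ = ‖ellFtoLp 1 x‖ := rfl

theorem stmt14 (p : ℝ) (hp : 1 ≤ p) [Fact (1 ≤ ENNReal.ofReal p)]
    (A : ℕ → ℕ → ℝ)
    (ha : ∀ n k : ℕ, Summable fun j : ℕ => |fibr (k + j + 1) ^ 2 / (fibr k * fibr (k + 1)) * A n (k + j)|)
    (L : ellF 1 →L[ℝ] lp (fun _ : ℕ => ℝ) (ENNReal.ofReal p))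
    (hrep : ∀ x : ellF 1, ∀ n : ℕ, (L x : ℕ → ℝ) n = ∑' k : ℕ, A n k * (x : ℕ → ℝ) k) :
    BddAbove (Set.range fun k : ℕ => (∑' n : ℕ, |abar (A n) k| ^ p) ^ (1 / p)) ∧
    ‖L‖ = ⨆ k : ℕ, (∑' n : ℕ, |abar (A n) k| ^ p) ^ (1 / p) := by
  have hp0 : (0 : ℝ) < p := lt_of_lt_of_le one_pos hp
  have htp : (ENNReal.ofReal p).toReal = p := ENNReal.toReal_ofReal (le_of_lt hp0)
  have htp' : (0 : ℝ) < (ENNReal.ofReal p).toReal := by rw [htp]; exact hp0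
  -- coordinates of L (ek k)
  have hcoord : ∀ k n : ℕ, (L (ek k) : ℕ → ℝ) n = abar (A n) k := by
    intro k n
    rw [hrep]
    set f : ℕ → ℝ := fun j => A n j * xk k j with hf
    have hshift : ∀ j : ℕ, f (j + k) =
        fibr (k + j + 1) ^ 2 / (fibr k * fibr (k + 1)) * A n (k + j) := by
      intro j
      have h1 : k ≤ j + k := Nat.le_add_left _ _
      have h2 : j + k = k + j := Nat.add_comm _ _
      simp only [hf, xk, h2, if_pos (Nat.le_add_right k j)]
      ring
    have hsum : Summable fun j : ℕ => f (j + k) := by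
      refine ((ha n k).of_abs).congr fun j => (hshift j).symm
    have hfsum : Summable f := (summable_nat_add_iff k).mp hsum
    have hzero : ∀ i ∈ Finset.range k, f i = 0 := by
      intro i hi
      have : ¬ (k ≤ i) := by simpa using Finset.mem_range.mp hi
      simp [hf, xk, this]
    have := hfsum.sum_add_tsum_nat_add k
    rw [Finset.sum_eq_zero hzero, zero_add] at this
    calc (∑' j : ℕ, A n j * ((ek k : ℕ → ℝ)) j) = ∑' j : ℕ, f j := rfl
      _ = ∑' j : ℕ, f (j + k) := this.symm
      _ = abar (A n) k := tsum_congr fun j => hshift j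
  -- norm of L (ek k)
  have hnorm : ∀ k : ℕ, ‖L (ek k)‖ = (∑' n : ℕ, |abar (A n) k| ^ p) ^ (1 / p) := by
    intro k
    have h := lp.norm_eq_tsum_rpow htp' (L (ek k))
    rw [htp] at h
    simpa only [hcoord, Real.norm_eq_abs] using h
  -- each value is at most ‖L‖
  have hle : ∀ k : ℕ, (∑' n : ℕ, |abar (A n) k| ^ p) ^ (1 / p) ≤ ‖L‖ := by
    intro k
    rw [← hnorm]
    calc ‖L (ek k)‖ ≤ ‖L‖ * ‖ek k‖ := L.le_opNorm _
      _ = ‖L‖ := by rw [norm_ek, mul_one]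
  have hbdd : BddAbove (Set.range fun k : ℕ => (∑' n : ℕ, |abar (A n) k| ^ p) ^ (1 / p)) := by
    refine ⟨‖L‖, ?_⟩
    rintro _ ⟨k, rfl⟩
    exact hle k
  set M : ℝ := ⨆ k : ℕ, (∑' n : ℕ, |abar (A n) k| ^ p) ^ (1 / p) with hM
  have hMge : ∀ k : ℕ, (∑' n : ℕ, |abar (A n) k| ^ p) ^ (1 / p) ≤ M :=
    fun k => le_ciSup hbdd k
  have hM0 : 0 ≤ M := by
    refine le_trans ?_ (hMge 0)
    exact Real.rpow_nonneg (tsum_nonneg fun n => Real.rpow_nonneg (abs_nonneg _) p) _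
  refine ⟨hbdd, le_antisymm ?_ (ciSup_le hle)⟩
  -- upper bound on the operator norm
  refine L.opNorm_le_bound hM0 ?_
  intro x
  set c : ℕ → ℝ := fun k => (ellFtoLp 1 x : ℕ → ℝ) k with hc
  have hS : HasSum (fun k : ℕ => lp.single 1 k (c k)) (ellFtoLp 1 x) :=
    lp.hasSum_single ENNReal.one_ne_top (ellFtoLp 1 x)
  set g : Finset ℕ → ellF 1 := fun s => ∑ k ∈ s, c k • ek k with hg
  have hgim : ∀ s : Finset ℕ, ellFtoLp 1 (g s) = ∑ k ∈ s, lp.single 1 k (c k) := by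
    intro s
    rw [hg, map_sum]
    refine Finset.sum_congr rfl fun k _ => ?_
    rw [map_smul, ellFtoLp_ek]
    rw [← lp.single_smul, smul_eq_mul, mul_one]
  have htend : Filter.Tendsto (fun s : Finset ℕ => ‖x - g s‖) Filter.atTop (𝓝 0) := by
    have h1 : Filter.Tendsto (fun s : Finset ℕ => ellFtoLp 1 x - ∑ k ∈ s, lp.single 1 k (c k))
        Filter.atTop (𝓝 (ellFtoLp 1 x - ellFtoLp 1 x)) :=
      Filter.Tendsto.sub tendsto_const_nhds hS
    rw [sub_self] at h1
    have h2 := h1.norm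
    rw [norm_zero] at h2
    refine h2.congr fun s => ?_
    rw [norm_ellF, map_sub, hgim]
  have hsum_le : ∀ s : Finset ℕ, ∑ k ∈ s, |c k| ≤ ‖x‖ := by
    intro s
    have h := lp.sum_rpow_le_norm_rpow (p := (1 : ℝ≥0∞)) (by norm_num) (ellFtoLp 1 x) s
    simp only [ENNReal.toReal_one, Real.rpow_one, Real.norm_eq_abs] at h
    rw [norm_ellF]
    exact h
  have hbound : ∀ s : Finset ℕ, ‖L x‖ ≤ ‖L‖ * ‖x - g s‖ + M * ‖x‖ := by
    intro s
    have h1 : ‖L x‖ ≤ ‖L (x - g s)‖ + ‖L (g s)‖ := by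
      have : L x = L (x - g s) + L (g s) := by rw [← map_add]; congr 1; abel
      rw [this]; exact norm_add_le _ _
    have h2 : ‖L (x - g s)‖ ≤ ‖L‖ * ‖x - g s‖ := L.le_opNorm _
    have h3 : ‖L (g s)‖ ≤ M * ‖x‖ := by
      rw [hg, map_sum]
      calc ‖∑ k ∈ s, L (c k • ek k)‖ ≤ ∑ k ∈ s, ‖L (c k • ek k)‖ := norm_sum_le _ _
        _ ≤ ∑ k ∈ s, |c k| * M := by
            refine Finset.sum_le_sum fun k _ => ?_
            rw [map_smul, norm_smul, Real.norm_eq_abs]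
            exact mul_le_mul_of_nonneg_left (by rw [hnorm]; exact hMge k) (abs_nonneg _)
        _ = M * ∑ k ∈ s, |c k| := by
            rw [Finset.mul_sum]
            exact Finset.sum_congr rfl fun k _ => mul_comm _ _
        _ ≤ M * ‖x‖ := mul_le_mul_of_nonneg_left (hsum_le s) hM0
    linarith
  have hlim : Filter.Tendsto (fun s : Finset ℕ => ‖L‖ * ‖x - g s‖ + M * ‖x‖)
      Filter.atTop (𝓝 (M * ‖x‖)) := by
    have := (htend.const_mul ‖L‖).add (tendsto_const_nhds (x := M * ‖x‖))
    simpa using this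
  exact ge_of_tendsto' hlim hbound
end
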